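/- Let Φ = (1+√5)/2 and ψ(x) = log_Φ(√5·(log_Φ(√5·x) + x) − 5 + 3/x) − 2. Then for every natural number n ≥ 2, ψ(F_{n+2} − n) < n. -/

import Mathlib

set_option maxHeartbeats 800000

open Real

lemma aux_logb_lt_of_lt_pow {A : ℝ} (m : ℕ) (hA : 0 < A) (h : A < goldenRatio ^ m) :
    Real.logb goldenRatio A < m := by
  have h1 : (1:ℝ) < goldenRatio := one_lt_goldenRatio
  calc Real.logb goldenRatio A < Real.logb goldenRatio (goldenRatio ^ m) :=
        Real.logb_lt_logb h1 hA h
    _ = m := by rw [Real.logb_pow, Real.logb_self_eq_one h1]; ring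

lemma aux_fib_ge (n : ℕ) : n + 1 ≤ Nat.fib (n + 2) := by
  induction n with
  | zero => simp
  | succ k ih =>
    have h := Nat.fib_pos.mpr (show 0 < k + 1 by omega)
    have e : Nat.fib (k+1+1) = Nat.fib (k+2) := rfl
    rw [show k + 1 + 2 = (k + 1) + 2 from rfl, Nat.fib_add_two]
    omega

lemma aux_fib_ge8 (n : ℕ) (hn : 5 ≤ n) : n + 8 ≤ Nat.fib (n + 2) := by
  induction n, hn using Nat.le_induction with
  | base => decide
  | succ k hk ih =>
    have h := Nat.fib_pos.mpr (show 0 < k + 1 by omega)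
    have e : Nat.fib (k+1+1) = Nat.fib (k+2) := rfl
    rw [show k + 1 + 2 = (k + 1) + 2 from rfl, Nat.fib_add_two]
    omega

lemma aux_main (n : ℕ) (hn : 2 ≤ n) (x : ℝ)
    (hx1 : 1 ≤ x)
    (hbinet : Real.sqrt 5 * x = goldenRatio ^ (n+2) - goldenConj ^ (n+2) - Real.sqrt 5 * n)
    (hx8 : 5 ≤ n → (8:ℝ) ≤ x)
    (hx2 : n = 2 → x = 1) (hx3 : n = 3 → x = 2) (hx4 : n = 4 → x = 4) :
    Real.logb goldenRatio (Real.sqrt 5 * (Real.logb goldenRatio (Real.sqrt 5 * x) + x) - 5 + 3 / x) - 2 < n := by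
  have s5 : Real.sqrt 5 ^ 2 = 5 := Real.sq_sqrt (by norm_num)
  have s5pos : (0:ℝ) < Real.sqrt 5 := Real.sqrt_pos.mpr (by norm_num)
  have s5lt : Real.sqrt 5 < 2.2361 := by nlinarith
  have s5gt : (2.2:ℝ) < Real.sqrt 5 := by nlinarith
  have g2 : goldenRatio ^ 2 = goldenRatio + 1 := goldenRatio_sq
  have g4 : goldenRatio ^ 4 = 3 * goldenRatio + 2 := by
    linear_combination (goldenRatio ^ 2 + goldenRatio + 2) * goldenRatio_sq
  have g5 : goldenRatio ^ 5 = 5 * goldenRatio + 3 := by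
    linear_combination (goldenRatio ^ 3 + goldenRatio ^ 2 + 2 * goldenRatio + 3) * goldenRatio_sq
  have g6 : goldenRatio ^ 6 = 8 * goldenRatio + 5 := by
    linear_combination (goldenRatio ^ 4 + goldenRatio ^ 3 + 2 * goldenRatio ^ 2 + 3 * goldenRatio + 5) * goldenRatio_sq
  have gval : goldenRatio = (1 + Real.sqrt 5) / 2 := rfl
  have hx0 : (0:ℝ) < x := by linarith
  set L : ℝ := Real.logb goldenRatio (Real.sqrt 5 * x) with hLdef
  have hsx1 : (1:ℝ) ≤ Real.sqrt 5 * x := by nlinarith [mul_le_mul_of_nonneg_left hx1 s5pos.le]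
  have hsxpos : (0:ℝ) < Real.sqrt 5 * x := mul_pos s5pos hx0
  have hL0 : 0 ≤ L := Real.logb_nonneg one_lt_goldenRatio hsx1
  set A : ℝ := Real.sqrt 5 * (L + x) - 5 + 3 / x with hAdef
  have h3xval : 3 / x * x = 3 := by field_simp
  have h3x0 : 0 < 3 / x := by positivity
  have hA0 : 0 < A := by
    have key : 5 < Real.sqrt 5 * x + 3 / x := by
      nlinarith [sq_nonneg (Real.sqrt 5 * x - 5/2), mul_pos s5pos hx0]
    have hsl : 0 ≤ Real.sqrt 5 * L := mul_nonneg s5pos.le hL0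
    rw [hAdef]
    nlinarith
  have hψ1 : -goldenConj ≤ 0.62 := by unfold goldenConj; linarith
  have hψ0 : (0:ℝ) ≤ -goldenConj := by linarith [goldenConj_neg]
  have hψpow : -goldenConj ^ (n+2) ≤ (0.62:ℝ) ^ (n+2) := by
    have h1 : (-goldenConj) ^ (n+2) ≤ (0.62:ℝ) ^ (n+2) := pow_le_pow_left₀ hψ0 hψ1 (n+2)
    calc -goldenConj ^ (n+2) ≤ |goldenConj ^ (n+2)| := neg_le_abs _
      _ = (-goldenConj) ^ (n+2) := by rw [abs_pow, abs_of_nonpos (le_of_lt goldenConj_neg)]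
      _ ≤ _ := h1
  have hmain : A < goldenRatio ^ (n+2) := by
    rcases eq_or_lt_of_le hn with h2 | h2
    · have hn2 : n = 2 := h2.symm
      have hxv : x = 1 := hx2 hn2
      have harg : Real.sqrt 5 * x < goldenRatio ^ 2 := by
        rw [hxv, g2, gval]; linarith
      have hLlt : L < 2 := by
        have h := aux_logb_lt_of_lt_pow 2 hsxpos harg
        rw [hLdef]; push_cast at h; linarith
      have hφ : goldenRatio ^ (n+2) = goldenRatio ^ 4 := by rw [hn2]
      rw [hAdef, hxv, hφ, g4, gval]
      have hh := mul_lt_mul_of_pos_left hLlt s5pos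
      linarith [hh]
    · rcases eq_or_lt_of_le (Nat.succ_le_of_lt h2) with h3 | h3
      · have hn3 : n = 3 := by omega
        have hxv : x = 2 := hx3 hn3
        have harg : Real.sqrt 5 * x < goldenRatio ^ 4 := by
          rw [hxv, g4, gval]; linarith
        have hLlt : L < 4 := by
          have h := aux_logb_lt_of_lt_pow 4 hsxpos harg
          rw [hLdef]; push_cast at h; linarith
        have hφ : goldenRatio ^ (n+2) = goldenRatio ^ 5 := by rw [hn3]
        rw [hAdef, hxv, hφ, g5, gval]
        have hh := mul_lt_mul_of_pos_left hLlt s5pos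
        linarith [hh]
      · rcases eq_or_lt_of_le (Nat.succ_le_of_lt h3) with h4 | h4
        · have hn4 : n = 4 := by omega
          have hxv : x = 4 := hx4 hn4
          have harg : Real.sqrt 5 * x < goldenRatio ^ 5 := by
            rw [hxv, g5, gval]; linarith
          have hLlt : L < 5 := by
            have h := aux_logb_lt_of_lt_pow 5 hsxpos harg
            rw [hLdef]; push_cast at h; linarith
          have hφ : goldenRatio ^ (n+2) = goldenRatio ^ 6 := by rw [hn4]
          rw [hAdef, hxv, hφ, g6, gval]
          have hh := mul_lt_mul_of_pos_left hLlt s5pos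
          linarith [hh]
        · have hn5 : 5 ≤ n := by omega
          have hx8' : (8:ℝ) ≤ x := hx8 hn5
          have hn5' : (5:ℝ) ≤ (n:ℝ) := by exact_mod_cast hn5
          have h3x8 : 3 / x ≤ 3 / 8 :=
            div_le_div_of_nonneg_left (by norm_num) (by linarith) hx8'
          have hψpow1 : -goldenConj ^ (n+2) ≤ 1 := by
            have := pow_le_one₀ (show (0:ℝ) ≤ 0.62 by norm_num) (show (0.62:ℝ) ≤ 1 by norm_num) (n := n+2)
            linarith
          have h5n : Real.sqrt 5 * 5 ≤ Real.sqrt 5 * n := mul_le_mul_of_nonneg_left hn5' s5pos.le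
          have hlt : Real.sqrt 5 * x < goldenRatio ^ (n+2) := by
            rw [hbinet]; linarith [hψpow1, h5n, s5gt]
          have hLlt : L < ((n:ℝ) + 2) := by
            have h := aux_logb_lt_of_lt_pow (n+2) hsxpos hlt
            rw [hLdef]; push_cast at h; linarith
          have hψ7 : -goldenConj ^ (n+2) ≤ (0.62:ℝ) ^ 7 := by
            have h1 : (0.62:ℝ) ^ (n+2) ≤ (0.62:ℝ) ^ 7 := by
              calc (0.62:ℝ) ^ (n+2) = (0.62:ℝ) ^ 7 * (0.62:ℝ) ^ (n-5) := by
                    rw [← pow_add]; congr 1; omega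
                _ ≤ (0.62:ℝ) ^ 7 * 1 := by
                    have := pow_le_one₀ (show (0:ℝ) ≤ 0.62 by norm_num) (show (0.62:ℝ) ≤ 1 by norm_num) (n := n-5)
                    nlinarith [pow_nonneg (show (0:ℝ) ≤ 0.62 by norm_num) 7]
                _ = (0.62:ℝ) ^ 7 := mul_one _
            linarith
          have h627 : ((0.62:ℝ)) ^ 7 ≤ 0.036 := by norm_num
          have hh := mul_lt_mul_of_pos_left hLlt s5pos
          rw [hAdef]
          linarith [hh, hbinet, hψ7, h627, h3x8, s5lt]
  have final := aux_logb_lt_of_lt_pow (n+2) hA0 hmain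
  push_cast at final
  linarith

theorem stmt12 (n : ℕ) (hn : 2 ≤ n) :
    let Φ : ℝ := (1 + Real.sqrt 5) / 2
    let ψ : ℝ → ℝ := fun x => Real.logb Φ (Real.sqrt 5 * (Real.logb Φ (Real.sqrt 5 * x) + x) - 5 + 3 / x) - 2
    ψ ((Nat.fib (n + 2) : ℝ) - n) < n := by
  intro Φ ψf
  have s5pos : (0:ℝ) < Real.sqrt 5 := Real.sqrt_pos.mpr (by norm_num)
  apply aux_main n hn ((Nat.fib (n + 2) : ℝ) - n)
  · have h := aux_fib_ge n
    have h' : (n:ℝ) + 1 ≤ (Nat.fib (n+2) : ℝ) := by exact_mod_cast h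
    linarith
  · have h := Real.coe_fib_eq (n+2)
    rw [h]
    field_simp
  · intro h5
    have h := aux_fib_ge8 n h5
    have h' : (n:ℝ) + 8 ≤ (Nat.fib (n+2) : ℝ) := by exact_mod_cast h
    linarith
  · intro h; subst h; norm_num
  · intro h; subst h; norm_num
  · intro h; subst h; norm_num
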